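/- Let θ be an automorphism of a finite generalised quadrangle of order (s,t) whose order is a prime x with x > s+1 and x > t+1. Then x divides the number of points (s+1)(st+1). -/

import Mathlib

/-- A (finite) generalised quadrangle of order `(s, t)`: every line is incident
with exactly `s + 1` points, every point is incident with exactly `t + 1` lines,
any two distinct points lie on at most one common line, and for every
non-incident point-line pair `(p, l)` there is a unique point on `l`
collinear with `p`. -/
structure GenQuadrangle (P L : Type*) (s t : ℕ) where
  inc : P → L → Prop
  pts_per_line : ∀ l : L, Nat.card {p : P // inc p l} = s + 1
  lines_per_pt : ∀ p : P, Nat.card {l : L // inc p l} = t + 1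
  unique_line : ∀ ⦃p q : P⦄ ⦃l m : L⦄, p ≠ q →
      inc p l → inc q l → inc p m → inc q m → l = m
  gq_axiom : ∀ (p : P) (l : L), ¬ inc p l →
      ∃! q : P, inc q l ∧ ∃ m : L, inc p m ∧ inc q m

/-- Two points are collinear if they are distinct and lie on a common line. -/
def GenQuadrangle.Collinear {P L : Type*} {s t : ℕ} (Q : GenQuadrangle P L s t)
    (p q : P) : Prop :=
  p ≠ q ∧ ∃ l : L, Q.inc p l ∧ Q.inc q l

/-- An automorphism of a generalised quadrangle: a pair of permutations of the
points and of the lines which together preserve incidence. -/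
structure GenQuadrangle.Auto {P L : Type*} {s t : ℕ} (Q : GenQuadrangle P L s t) where
  permP : Equiv.Perm P
  permL : Equiv.Perm L
  pres : ∀ (p : P) (l : L), Q.inc p l ↔ Q.inc (permP p) (permL l)

section Aux

open Function

/-- If `σ ^ x = 1` with `x` prime and `(σ ^ n) a = a` with `x ∤ n`, then `σ a = a`. -/
lemma aux_fix_of_pow {α : Type*} (σ : Equiv.Perm α) {x : ℕ} (hx : x.Prime)
    (hσ : σ ^ x = 1) {a : α} {n : ℕ} (hn : (σ ^ n) a = a) (hxn : ¬ x ∣ n) : σ a = a := by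
  have hpx : Function.IsPeriodicPt σ x a := by
    show (⇑σ)^[x] a = a
    rw [← Equiv.Perm.coe_pow, hσ]; rfl
  have hpn : Function.IsPeriodicPt σ n a := by
    show (⇑σ)^[n] a = a
    rw [← Equiv.Perm.coe_pow]; exact hn
  have h1 : Function.minimalPeriod σ a ∣ x := hpx.minimalPeriod_dvd
  have h2 : Function.minimalPeriod σ a ∣ n := hpn.minimalPeriod_dvd
  rcases (Nat.Prime.eq_one_or_self_of_dvd hx _ h1) with h | h
  · exact Function.minimalPeriod_eq_one_iff_isFixedPt.mp h
  · exact absurd (h ▸ h2) hxn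

/-- Orbit argument: if `σ ^ x = 1`, `x` prime, `T` is σ-invariant with `Nat.card T < x`,
then every element of `T` is fixed by `σ`. -/
lemma aux_fix_of_card_lt {α : Type*} [Finite α] (σ : Equiv.Perm α) {x : ℕ} (hx : x.Prime)
    (hσ : σ ^ x = 1) (T : Set α) (hT : ∀ a ∈ T, σ a ∈ T)
    (hcard : Nat.card T < x) {a : α} (ha : a ∈ T) : σ a = a := by
  by_contra hne
  have hmem : ∀ k : ℕ, (σ ^ k) a ∈ T := by
    intro k
    induction k with
    | zero => simpa using ha
    | succ k ih =>
      rw [pow_succ', Equiv.Perm.mul_apply]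
      exact hT _ ih
  have key : ∀ i j : ℕ, i < j → j < x → (σ ^ i) a = (σ ^ j) a → False := by
    intro i j hlt hjx hij
    have hkey : (σ ^ (j - i)) a = a := by
      apply (Equiv.injective (σ ^ i))
      calc (σ ^ i) ((σ ^ (j - i)) a) = (σ ^ (i + (j - i))) a := by
            rw [pow_add, Equiv.Perm.mul_apply]
        _ = (σ ^ j) a := by rw [Nat.add_sub_cancel' (le_of_lt hlt)]
        _ = (σ ^ i) a := hij.symm
    have hnd : ¬ x ∣ (j - i) := by
      intro hdvd
      have := Nat.le_of_dvd (by omega) hdvd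
      omega
    exact hne (aux_fix_of_pow σ hx hσ hkey hnd)
  have hinj : Function.Injective (fun k : Fin x => (⟨(σ ^ (k : ℕ)) a, hmem _⟩ : T)) := by
    intro i j hij
    simp only [Subtype.mk.injEq] at hij
    by_contra hne'
    rcases Nat.lt_or_ge (i : ℕ) (j : ℕ) with h | h
    · exact key _ _ h j.isLt hij
    · have : (j : ℕ) < (i : ℕ) := by
        rcases Nat.lt_or_ge (j : ℕ) (i : ℕ) with h' | h'
        · exact h'
        · exact absurd (Fin.ext (le_antisymm h' h)) hne'
      exact key _ _ this i.isLt hij.symm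
  have hle := Nat.card_le_card_of_injective _ hinj
  have hT' : Nat.card {y // y ∈ T} = Nat.card T := rfl
  simp [Nat.card_eq_fintype_card, hT'] at hle
  rw [Nat.card_coe_set_eq] at hcard
  omega

end Aux

namespace GQaux

open Finset

variable {P L : Type*} {s t : ℕ}

set_option linter.unusedSectionVars false

lemma filter_pts_card [Fintype P] (Q : GenQuadrangle P L s t) (l : L) [DecidablePred (fun q => Q.inc q l)] :
    (Finset.univ.filter fun q => Q.inc q l).card = s + 1 := by
  classical
  have h := Q.pts_per_line l
  rw [Nat.card_eq_fintype_card, Fintype.card_subtype] at h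
  convert h using 2

lemma filter_lines_card [Fintype L] (Q : GenQuadrangle P L s t) (p : P) [DecidablePred (fun m : L => Q.inc p m)] :
    (Finset.univ.filter fun m : L => Q.inc p m).card = t + 1 := by
  classical
  have h := Q.lines_per_pt p
  rw [Nat.card_eq_fintype_card, Fintype.card_subtype] at h
  convert h using 2

/-- Number of points on a line other than a given point on it. -/
lemma filter_pts_ne_card [Fintype P] (Q : GenQuadrangle P L s t) (l : L) (p : P) (hp : Q.inc p l) :
    letI := Classical.decEq P; letI := Classical.decPred (fun q => Q.inc q l)
    ((Finset.univ.filter fun q => Q.inc q l).erase p).card = s := by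
  classical
  rw [Finset.card_erase_of_mem (by simp [hp]), filter_pts_card]
  simp

lemma card_points [Fintype P] [Fintype L] (Q : GenQuadrangle P L s t) (hne : Nonempty P) :
    Fintype.card P = (s + 1) * (s * t + 1) := by
  classical
  obtain ⟨p⟩ := hne
  -- a line through p
  have hl0 : ∃ l₀ : L, Q.inc p l₀ := by
    have h := filter_lines_card Q p
    have : (Finset.univ.filter fun m : L => Q.inc p m).Nonempty := by
      rw [← Finset.card_pos, h]; omega
    obtain ⟨l₀, hl₀⟩ := this
    exact ⟨l₀, (Finset.mem_filter.mp hl₀).2⟩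
  obtain ⟨l₀, hl₀⟩ := hl0
  -- B : points collinear with p
  set B : Finset P := (Finset.univ.filter fun m : L => Q.inc p m).biUnion
      (fun m => (Finset.univ.filter fun q => Q.inc q m).erase p) with hB
  have hBcard : B.card = (t + 1) * s := by
    rw [hB, Finset.card_biUnion, Finset.sum_congr rfl
        (fun m hm => filter_pts_ne_card Q m p (Finset.mem_filter.mp hm).2)]
    · rw [Finset.sum_const, smul_eq_mul, filter_lines_card]
    · intro m hm m' hm' hne'
      simp only [Finset.mem_coe, Finset.mem_filter, Finset.mem_univ, true_and] at hm hm'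
      rw [Function.onFun, Finset.disjoint_left]
      intro q hq hq'
      simp only [Finset.mem_erase, Finset.mem_filter, Finset.mem_univ, true_and] at hq hq'
      exact hne' (Q.unique_line (Ne.symm hq.1) hm hq.2 hm' hq'.2)
  have hBmem : ∀ q, q ∈ B ↔ Q.Collinear p q := by
    intro q
    simp only [hB, Finset.mem_biUnion, Finset.mem_filter, Finset.mem_univ, true_and,
      Finset.mem_erase, GenQuadrangle.Collinear]
    constructor
    · rintro ⟨m, hpm, hqp, hqm⟩
      exact ⟨Ne.symm hqp, m, hpm, hqm⟩
    · rintro ⟨hpq, m, hpm, hqm⟩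
      exact ⟨m, hpm, Ne.symm hpq, hqm⟩
  -- for r on l₀, r ≠ p : the points collinear with r not on l₀
  set Cr : P → Finset P := fun r => ((Finset.univ.filter fun m : L => Q.inc r m).erase l₀).biUnion
      (fun m => (Finset.univ.filter fun q => Q.inc q m).erase r) with hCr
  have hCrcard : ∀ r, Q.inc r l₀ → (Cr r).card = t * s := by
    intro r hr
    rw [hCr]
    rw [Finset.card_biUnion]
    · rw [Finset.sum_congr rfl (fun m hm => filter_pts_ne_card Q m r
        (Finset.mem_filter.mp (Finset.mem_of_mem_erase hm)).2)]
      rw [Finset.sum_const, smul_eq_mul, Finset.card_erase_of_mem (by simp [hr]),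
        filter_lines_card]
      simp
    · intro m hm m' hm' hne'
      have hm1 := (Finset.mem_filter.mp (Finset.mem_of_mem_erase hm)).2
      have hm1' := (Finset.mem_filter.mp (Finset.mem_of_mem_erase hm')).2
      rw [Function.onFun, Finset.disjoint_left]
      intro q hq hq'
      simp only [Finset.mem_erase, Finset.mem_filter, Finset.mem_univ, true_and] at hq hq'
      exact hne' (Q.unique_line (Ne.symm hq.1) hm1 hq.2 hm1' hq'.2)
  -- C : union of the Cr
  set C : Finset P := ((Finset.univ.filter fun r => Q.inc r l₀).erase p).biUnion Cr with hC
  -- key fact about the structure of Cr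
  have hCrStruct : ∀ r, Q.inc r l₀ → r ≠ p → ∀ q, q ∈ Cr r →
      q ≠ p ∧ ¬ Q.Collinear p q ∧ ¬ Q.inc q l₀ ∧
        (∃ m, Q.inc q m ∧ Q.inc r m) := by
    intro r hrl₀ hrp q hq
    simp only [hCr, Finset.mem_biUnion, Finset.mem_erase, Finset.mem_filter, Finset.mem_univ,
      true_and] at hq
    obtain ⟨m, ⟨hml₀, hrm⟩, hqr, hqm⟩ := hq
    -- p is not on m
    have hpm : ¬ Q.inc p m := fun hpm => hml₀ (Q.unique_line hrp hrm hpm hrl₀ hl₀)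
    have hqp : q ≠ p := fun h => hpm (h ▸ hqm)
    have hqcol : ¬ Q.Collinear p q := by
      rintro ⟨hpq, n, hpn, hqn⟩
      obtain ⟨w, hw, huniq⟩ := Q.gq_axiom p m hpm
      have h1 : q = w := huniq q ⟨hqm, n, hpn, hqn⟩
      have h2 : r = w := huniq r ⟨hrm, l₀, hl₀, hrl₀⟩
      exact hqr (h1.trans h2.symm)
    have hql₀ : ¬ Q.inc q l₀ := by
      intro hql₀
      exact hqcol ⟨Ne.symm hqp, l₀, hl₀, hql₀⟩
    exact ⟨hqp, hqcol, hql₀, m, hqm, hrm⟩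
  have hCcard : C.card = s * (t * s) := by
    rw [hC, Finset.card_biUnion]
    · rw [Finset.sum_congr rfl (fun r hr => hCrcard r
        (Finset.mem_filter.mp (Finset.mem_of_mem_erase hr)).2)]
      rw [Finset.sum_const, smul_eq_mul, Finset.card_erase_of_mem (by simp [hl₀]),
        filter_pts_card]
      simp
    · intro r hr r' hr' hne'
      have hr1 := Finset.mem_erase.mp hr
      have hr1' := Finset.mem_erase.mp hr'
      have hrl := (Finset.mem_filter.mp hr1.2).2
      have hrl' := (Finset.mem_filter.mp hr1'.2).2
      rw [Function.onFun, Finset.disjoint_left]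
      intro q hq hq'
      obtain ⟨hqp, hqcol, hql₀, m, hqm, hrm⟩ := hCrStruct r hrl hr1.1 q hq
      obtain ⟨_, _, _, m', hqm', hrm'⟩ := hCrStruct r' hrl' hr1'.1 q hq'
      obtain ⟨w, hw, huniq⟩ := Q.gq_axiom q l₀ hql₀
      have h1 : r = w := huniq r ⟨hrl, m, hqm, hrm⟩
      have h2 : r' = w := huniq r' ⟨hrl', m', hqm', hrm'⟩
      exact hne' (h1.trans h2.symm)
  have hCmem : ∀ q, q ∈ C ↔ q ≠ p ∧ ¬ Q.Collinear p q := by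
    intro q
    constructor
    · intro hq
      simp only [hC, Finset.mem_biUnion] at hq
      obtain ⟨r, hr, hqr⟩ := hq
      have hr1 := Finset.mem_erase.mp hr
      have hrl := (Finset.mem_filter.mp hr1.2).2
      obtain ⟨hqp, hqcol, _, _⟩ := hCrStruct r hrl hr1.1 q hqr
      exact ⟨hqp, hqcol⟩
    · rintro ⟨hqp, hqcol⟩
      have hql₀ : ¬ Q.inc q l₀ := fun h => hqcol ⟨Ne.symm hqp, l₀, hl₀, h⟩
      obtain ⟨r, ⟨hrl, m, hqm, hrm⟩, _⟩ := Q.gq_axiom q l₀ hql₀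
      have hrp : r ≠ p := by
        rintro rfl
        exact hqcol ⟨Ne.symm hqp, m, hrm, hqm⟩
      have hml₀ : m ≠ l₀ := fun h => hql₀ (h ▸ hqm)
      have hqr : q ≠ r := fun h => hql₀ (h ▸ hrl)
      simp only [hC, Finset.mem_biUnion]
      refine ⟨r, Finset.mem_erase.mpr ⟨hrp, by simp [hrl]⟩, ?_⟩
      simp only [hCr, Finset.mem_biUnion, Finset.mem_erase, Finset.mem_filter, Finset.mem_univ,
        true_and]
      exact ⟨m, ⟨hml₀, hrm⟩, hqr, hqm⟩
  -- partition
  have hpart : (Finset.univ : Finset P) = insert p (B ∪ C) := by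
    ext q
    simp only [Finset.mem_univ, Finset.mem_insert, Finset.mem_union, true_iff]
    by_cases hqp : q = p
    · exact Or.inl hqp
    · right
      by_cases hcol : Q.Collinear p q
      · exact Or.inl ((hBmem q).mpr hcol)
      · exact Or.inr ((hCmem q).mpr ⟨hqp, hcol⟩)
  have hpB : p ∉ B ∪ C := by
    intro h
    rcases Finset.mem_union.mp h with h | h
    · exact ((hBmem p).mp h).1 rfl
    · exact ((hCmem p).mp h).1 rfl
  have hBC : Disjoint B C := by
    rw [Finset.disjoint_left]
    intro q hq hq'
    exact ((hCmem q).mp hq').2 ((hBmem q).mp hq)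
  have : Fintype.card P = 1 + ((t + 1) * s + s * (t * s)) := by
    rw [← Finset.card_univ, hpart, Finset.card_insert_of_notMem hpB,
      Finset.card_union_of_disjoint hBC, hBcard, hCcard]
    omega
  rw [this]; ring

end GQaux

/-- If a finite generalised quadrangle of order (s,t) has an automorphism of
prime order x with x > s+1 and x > t+1, then x divides the number of points
(s+1)(st+1). -/
theorem prime_order_auto_divides_card_points {P L : Type*} [Fintype P] [Fintype L]
    {s t x : ℕ} (Q : GenQuadrangle P L s t) (θ : Q.Auto)
    (hx : x.Prime) (hord : orderOf (θ.permP, θ.permL) = x)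
    (hxs : s + 1 < x) (hxt : t + 1 < x) :
    x ∣ (s + 1) * (s * t + 1) := by
  classical
  have hx1 : 1 < x := hx.one_lt
  -- component powers
  have hpow : (θ.permP, θ.permL) ^ x = 1 := by
    rw [← hord]; exact pow_orderOf_eq_one _
  have hP : θ.permP ^ x = 1 := by
    have := congrArg Prod.fst hpow
    simpa using this
  have hL : θ.permL ^ x = 1 := by
    have := congrArg Prod.snd hpow
    simpa using this
  -- a fixed point forces everything to be fixed
  have fixL : ∀ p : P, θ.permP p = p → ∀ l : L, Q.inc p l → θ.permL l = l := by
    intro p hp l hl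
    refine aux_fix_of_card_lt θ.permL hx hL {m : L | Q.inc p m} ?_ ?_ hl
    · intro m hm
      have := (θ.pres p m).mp hm
      rwa [hp] at this
    · have : Nat.card {m : L | Q.inc p m} = t + 1 := Q.lines_per_pt p
      omega
  have fixP : ∀ l : L, θ.permL l = l → ∀ p : P, Q.inc p l → θ.permP p = p := by
    intro l hl p hp
    refine aux_fix_of_card_lt θ.permP hx hP {q : P | Q.inc q l} ?_ ?_ hp
    · intro q hq
      have := (θ.pres q l).mp hq
      rwa [hl] at this
    · have : Nat.card {q : P | Q.inc q l} = s + 1 := Q.pts_per_line l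
      omega
  by_cases hfix : ∃ p : P, θ.permP p = p
  · -- everything is fixed, contradiction with prime order
    exfalso
    obtain ⟨p, hp⟩ := hfix
    -- a line through p
    have hl0 : ∃ l₀ : L, Q.inc p l₀ := by
      have h := Q.lines_per_pt p
      have hpos : 0 < Nat.card {l : L // Q.inc p l} := by omega
      obtain ⟨⟨l₀, hl₀⟩⟩ := (Nat.card_pos_iff.mp hpos).1
      exact ⟨l₀, hl₀⟩
    obtain ⟨l₀, hl₀⟩ := hl0
    have hfl₀ : θ.permL l₀ = l₀ := fixL p hp l₀ hl₀
    -- all points fixed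
    have allP : ∀ q : P, θ.permP q = q := by
      intro q
      by_cases hqp : q = p
      · exact hqp ▸ hp
      by_cases hcol : Q.Collinear p q
      · obtain ⟨_, n, hpn, hqn⟩ := hcol
        exact fixP n (fixL p hp n hpn) q hqn
      · have hql₀ : ¬ Q.inc q l₀ := fun h => hcol ⟨Ne.symm hqp, l₀, hl₀, h⟩
        obtain ⟨r, ⟨hrl, m, hqm, hrm⟩, _⟩ := Q.gq_axiom q l₀ hql₀
        have hr : θ.permP r = r := fixP l₀ hfl₀ r hrl
        exact fixP m (fixL r hr m hrm) q hqm
    -- all lines fixed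
    have allL : ∀ l : L, θ.permL l = l := by
      intro l
      have h := Q.pts_per_line l
      have hpos : 0 < Nat.card {q : P // Q.inc q l} := by omega
      obtain ⟨⟨r, hr⟩⟩ := (Nat.card_pos_iff.mp hpos).1
      exact fixL r (allP r) l hr
    have : (θ.permP, θ.permL) = 1 := by
      have h1 : θ.permP = 1 := Equiv.ext allP
      have h2 : θ.permL = 1 := Equiv.ext allL
      rw [h1, h2]; rfl
    rw [this, orderOf_one] at hord
    omega
  · -- no fixed point: x divides the number of points
    push_neg at hfix
    have hPne : Nonempty P := by
      by_contra hne
      have hPe : IsEmpty P := not_nonempty_iff.mp hne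
      have hLe : IsEmpty L := by
        by_contra hLne
        obtain ⟨l⟩ := not_isEmpty_iff.mp hLne
        have h := Q.pts_per_line l
        rw [Nat.card_of_isEmpty] at h
        omega
      have : (θ.permP, θ.permL) = 1 := by
        have h1 : θ.permP = 1 := Equiv.ext fun q => hPe.elim q
        have h2 : θ.permL = 1 := Equiv.ext fun l => hLe.elim l
        rw [h1, h2]; rfl
      rw [this, orderOf_one] at hord
      omega
    have hordP : orderOf θ.permP = x := by
      have hdvd : orderOf θ.permP ∣ x := orderOf_dvd_of_pow_eq_one hP
      rcases (Nat.Prime.eq_one_or_self_of_dvd hx _ hdvd) with h | h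
      · exfalso
        have : θ.permP = 1 := orderOf_eq_one_iff.mp h
        obtain ⟨q⟩ := hPne
        exact hfix q (by rw [this]; rfl)
      · exact h
    haveI : Fact x.Prime := ⟨hx⟩
    have hpg : IsPGroup x (Subgroup.zpowers θ.permP) :=
      IsPGroup.of_card (n := 1) (by rw [Nat.card_zpowers, hordP, pow_one])
    have hfixed : IsEmpty (MulAction.fixedPoints (Subgroup.zpowers θ.permP) P) := by
      rw [isEmpty_subtype]
      intro q hq
      have := hq ⟨θ.permP, Subgroup.mem_zpowers _⟩
      exact hfix q this
    have hmod := hpg.card_modEq_card_fixedPoints P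
    have h0 : Nat.card (MulAction.fixedPoints (Subgroup.zpowers θ.permP) P) = 0 :=
      Nat.card_of_isEmpty
    rw [h0] at hmod
    have hdvd : x ∣ Nat.card P := (Nat.modEq_zero_iff_dvd).mp hmod
    rwa [Nat.card_eq_fintype_card, GQaux.card_points Q hPne] at hdvd
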